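/- Let N ≥ 2 and m ≥ 2, j ∈ ℕ. Then lim_{k→∞} [((mk+j)!)^N / (N(mk+j))!] · [(Nk)! / (k!)^N] = 0. Equivalently, lim_{k→∞} m^{(N-1)/2} (N^N)^{(1-m)k - j} = 0, using Stirling's approximation. -/

import Mathlib

open Filter Nat

lemma bern (a s : ℕ) : a ^ s * (a + s) ≤ (a + 1) ^ s * a := by
  induction s with
  | zero => simp
  | succ s ih =>
    have h1 : a ^ (s+1) * (a + (s+1)) = a * (a ^ s * (a + s)) + a * a ^ s := by ring
    have h2 : a * a ^ s ≤ a * (a+1) ^ s :=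
      Nat.mul_le_mul_left a (Nat.pow_le_pow_left (Nat.le_succ a) s)
    calc a ^ (s+1) * (a + (s+1)) = a * (a ^ s * (a + s)) + a * a ^ s := h1
      _ ≤ a * ((a+1) ^ s * a) + a * (a+1) ^ s :=
        Nat.add_le_add (Nat.mul_le_mul_left a ih) h2
      _ = (a+1) ^ (s+1) * a := by ring

lemma fact_add_le (a b : ℕ) : (a + b)! ≤ a ! * (a + b) ^ b := by
  induction b with
  | zero => simp
  | succ b ih =>
    have h1 : (a + (b+1))! = (a + b + 1) * (a + b)! := by
      rw [show a + (b+1) = (a + b) + 1 by ring, factorial_succ]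
    calc (a + (b+1))! = (a + b + 1) * (a + b)! := h1
      _ ≤ (a + b + 1) * (a ! * (a + b) ^ b) := Nat.mul_le_mul_left _ ih
      _ ≤ (a + b + 1) * (a ! * (a + b + 1) ^ b) := by
          exact Nat.mul_le_mul_left _ (Nat.mul_le_mul_left _
            (Nat.pow_le_pow_left (Nat.le_succ _) b))
      _ = a ! * (a + (b+1)) ^ (b+1) := by ring

lemma upper_multinomial (N : ℕ) : ∀ k, (N * k)! ≤ N ^ (N * k) * (k !) ^ N := by
  intro k
  induction k with
  | zero => simp
  | succ k ih =>
    have h0 : N * (k+1) = N * k + N := by ring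
    calc (N * (k+1))! = (N * k + N)! := by rw [h0]
      _ ≤ (N * k)! * (N * k + N) ^ N := fact_add_le _ _
      _ ≤ (N ^ (N*k) * (k !) ^ N) * (N * (k+1)) ^ N := by
          refine Nat.mul_le_mul ih (Nat.pow_le_pow_left (le_of_eq ?_) N)
          ring
      _ = N ^ (N * (k+1)) * ((k+1)!) ^ N := by
          have e1 : (N*(k+1))^N = N^N * (k+1)^N := mul_pow _ _ _
          have e2 : ((k+1)!) ^ N = (k+1)^N * (k !)^N := by rw [factorial_succ, mul_pow]
          rw [e1, e2, h0, pow_add]; ring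

lemma lower_multinomial (N : ℕ) (hN : 1 ≤ N) :
    ∀ n, N ^ (N * n) * (n !) ^ N ≤ (N * n)! * (n + 1) ^ (N * (N - 1)) := by
  obtain ⟨s, rfl⟩ : ∃ s, N = s + 1 := ⟨N - 1, by omega⟩
  intro n
  set N := s + 1 with hNdef
  have hD : N * (N - 1) = N * s := by simp [hNdef]
  induction n with
  | zero => simp [hD]
  | succ n ih =>
    -- key2 : (N*n + N) * (n+1)^s ≤ (N*n + 1) * (n+2)^s
    have key2 : (N * n + N) * (n+1) ^ s ≤ (N * n + 1) * (n+2) ^ s := by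
      have hb := bern (n+1) s
      -- (n+1)^s * (n+1+s) ≤ (n+2)^s * (n+1)
      have h3 : (N * n + N) * (n + 1) ≤ (N * n + 1) * (n + 1 + s) := by
        have : (N*n+1) * (n+1+s) = (N*n+N) * (n+1) + s * s * n := by
          simp only [hNdef]; ring
        omega
      have h4 : ((N * n + N) * (n+1) ^ s) * (n+1) ≤ ((N * n + 1) * (n+2) ^ s) * (n+1) := by
        calc ((N * n + N) * (n+1) ^ s) * (n+1) = ((N*n+N)*(n+1)) * (n+1)^s := by ring
          _ ≤ ((N*n+1)*(n+1+s)) * (n+1)^s := Nat.mul_le_mul_right _ h3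
          _ = (N*n+1) * ((n+1)^s * (n+1+s)) := by ring
          _ ≤ (N*n+1) * ((n+2)^s * (n+1)) := Nat.mul_le_mul_left _ hb
          _ = ((N * n + 1) * (n+2) ^ s) * (n+1) := by ring
      exact Nat.le_of_mul_le_mul_right h4 (by omega)
    have key : N ^ N * (n+1) ^ N * (n+1) ^ (N * s) ≤ (N * n + 1) ^ N * (n+2) ^ (N * s) := by
      have : (N * n + N) ^ N * ((n+1) ^ s) ^ N ≤ (N * n + 1) ^ N * ((n+2) ^ s) ^ N := by
        rw [← mul_pow, ← mul_pow]
        exact Nat.pow_le_pow_left key2 N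
      calc N ^ N * (n+1) ^ N * (n+1) ^ (N * s)
          = (N * n + N) ^ N * ((n+1) ^ s) ^ N := by
            rw [show N*n+N = N*(n+1) by ring, mul_pow, ← pow_mul, mul_comm s N]
        _ ≤ (N * n + 1) ^ N * ((n+2) ^ s) ^ N := this
        _ = (N * n + 1) ^ N * (n+2) ^ (N * s) := by rw [← pow_mul]; ring_nf
    have hfac : (N * n)! * (N * n + 1) ^ N ≤ (N * (n+1))! := by
      have := Nat.factorial_mul_pow_le_factorial (m := N * n) (n := N)
      calc (N * n)! * (N * n + 1) ^ N ≤ (N * n + N)! := this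
        _ = (N * (n+1))! := by rw [show N * n + N = N * (n+1) by ring]
    calc N ^ (N * (n+1)) * ((n+1)!) ^ N
        = (N ^ N * (n+1) ^ N) * (N ^ (N * n) * (n !) ^ N) := by
          rw [factorial_succ, mul_pow, pow_add]; ring
      _ ≤ (N ^ N * (n+1) ^ N) * ((N * n)! * (n + 1) ^ (N * (N-1))) :=
          Nat.mul_le_mul_left _ ih
      _ = (N * n)! * (N ^ N * (n+1) ^ N * (n+1) ^ (N * s)) := by rw [hD]; ring
      _ ≤ (N * n)! * ((N * n + 1) ^ N * (n+2) ^ (N * s)) := Nat.mul_le_mul_left _ key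
      _ ≤ (N * (n+1))! * (n+2) ^ (N * s) := by
          calc (N * n)! * ((N * n + 1) ^ N * (n+2) ^ (N * s))
              = ((N * n)! * (N * n + 1) ^ N) * (n+2) ^ (N * s) := by ring
            _ ≤ (N * (n+1))! * (n+2) ^ (N * s) := Nat.mul_le_mul_right _ hfac
      _ = (N * (n+1))! * (n + 1 + 1) ^ (N * (N - 1)) := by rw [hD]

theorem stirling_limit_zero (N m j : ℕ) (hN : 2 ≤ N) (hm : 2 ≤ m) :
    Tendsto (fun k : ℕ =>
        (((m * k + j).factorial : ℝ)) ^ N / (((N * (m * k + j)).factorial : ℝ)) *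
          (((N * k).factorial : ℝ) / ((k.factorial : ℝ)) ^ N))
      atTop (nhds 0) ∧
    Tendsto (fun k : ℕ =>
        (m : ℝ) ^ (((N : ℝ) - 1) / 2) *
          ((N : ℝ) ^ (N : ℕ)) ^ ((1 - (m : ℤ)) * (k : ℤ) - (j : ℤ)))
      atTop (nhds 0) := by
  have hN0 : (0:ℝ) < (N:ℝ) := by positivity
  have hN1 : (1:ℝ) < (N:ℝ) := by exact_mod_cast lt_of_lt_of_le one_lt_two hN
  constructor
  · -- Part 1
    set D := N * (N - 1) with hDdef
    set r : ℝ := ((N:ℝ) ^ (N * (m - 1)))⁻¹ with hrdef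
    set c : ℝ := ((N:ℝ) ^ (N * j))⁻¹ with hcdef
    have hbig : (1:ℝ) < (N:ℝ) ^ (N * (m - 1)) := by
      apply one_lt_pow₀ hN1
      have : 1 ≤ m - 1 := by omega
      positivity
    have hr0 : 0 < r := by rw [hrdef]; positivity
    have hr1 : r < 1 := by
      rw [hrdef, inv_lt_one_iff₀]; right; exact hbig
    have hc0 : 0 < c := by rw [hcdef]; positivity
    set C : ℝ := (c / r) * ((m + j + 1 : ℕ) : ℝ) ^ D with hCdef
    -- limit of the majorant
    have hF : Tendsto (fun k : ℕ => ((k:ℝ)) ^ D * r ^ k) atTop (nhds 0) :=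
      (summable_pow_mul_geometric_of_norm_lt_one (R := ℝ) D
        (by rw [Real.norm_eq_abs, abs_of_pos hr0]; exact hr1)).tendsto_atTop_zero
    have hG : Tendsto (fun k : ℕ => C * (((k+1:ℕ):ℝ) ^ D * r ^ (k+1))) atTop (nhds 0) := by
      have := (hF.comp (tendsto_add_atTop_nat 1)).const_mul C
      simpa using this
    -- squeeze
    refine squeeze_zero (fun k => by positivity) (fun k => ?_) hG
    set n := m * k + j with hndef
    have hfn : (0:ℝ) < ((N * n)! : ℝ) := by positivity
    have hfk : (0:ℝ) < ((k ! : ℕ) : ℝ) ^ N := by positivity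
    -- step 1: bound by (n+1)^D * N^(N*k) / N^(N*n)
    have h1 : ((n ! : ℕ):ℝ) ^ N / ((N * n)! : ℝ) ≤ ((n+1:ℕ):ℝ) ^ D / (N:ℝ) ^ (N * n) := by
      rw [div_le_div_iff₀ hfn (by positivity)]
      have := lower_multinomial N (by omega) n
      have hcast : ((N:ℝ)) ^ (N * n) * ((n ! : ℕ):ℝ) ^ N ≤ ((N * n)! : ℝ) * ((n+1:ℕ):ℝ) ^ D := by
        exact_mod_cast this
      calc ((n ! : ℕ):ℝ) ^ N * (N:ℝ) ^ (N * n) = (N:ℝ) ^ (N * n) * ((n ! : ℕ):ℝ) ^ N := by ring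
        _ ≤ ((N * n)! : ℝ) * ((n+1:ℕ):ℝ) ^ D := hcast
        _ = ((n+1:ℕ):ℝ) ^ D * ((N * n)! : ℝ) := by ring
    have h2 : (((N * k)! : ℕ):ℝ) / ((k ! : ℕ):ℝ) ^ N ≤ (N:ℝ) ^ (N * k) := by
      rw [div_le_iff₀ hfk]
      exact_mod_cast upper_multinomial N k
    have hmul : ((n ! : ℕ):ℝ) ^ N / ((N * n)! : ℝ) * ((((N * k)! : ℕ):ℝ) / ((k ! : ℕ):ℝ) ^ N)
        ≤ (((n+1:ℕ):ℝ) ^ D / (N:ℝ) ^ (N * n)) * (N:ℝ) ^ (N * k) := by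
      apply mul_le_mul h1 h2 (by positivity) (by positivity)
    refine hmul.trans ?_
    -- step 2: rewrite powers of N
    obtain ⟨m', rfl⟩ : ∃ m', m = m' + 2 := ⟨m - 2, by omega⟩
    have hexp : N * n = N * k + (N * ((m' + 2 - 1) * k) + N * j) := by
      simp only [hndef]
      have : m' + 2 - 1 = m' + 1 := rfl
      rw [this]; ring
    have hpow : (N:ℝ) ^ (N * n) = (N:ℝ) ^ (N * k) * (((N:ℝ) ^ (N * (m' + 2 - 1))) ^ k * (N:ℝ) ^ (N * j)) := by
      rw [hexp, pow_add, pow_add, ← pow_mul]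
      ring_nf
    have heq : (((n+1:ℕ):ℝ) ^ D / (N:ℝ) ^ (N * n)) * (N:ℝ) ^ (N * k)
        = ((n+1:ℕ):ℝ) ^ D * r ^ k * c := by
      rw [hpow, hrdef, hcdef]
      field_simp
      ring_nf
      rw [← mul_pow, mul_inv_cancel₀ hN0.ne', one_pow]
    rw [heq]
    -- step 3: compare with majorant
    have hle : ((n+1:ℕ):ℝ) ≤ (((m' + 2) + j + 1 : ℕ):ℝ) * ((k+1:ℕ):ℝ) := by
      have : (n + 1 : ℕ) ≤ ((m' + 2) + j + 1) * (k + 1) := by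
        simp only [hndef]; ring_nf; omega
      exact_mod_cast this
    have hfinal : ((n+1:ℕ):ℝ) ^ D * r ^ k * c
        ≤ C * (((k+1:ℕ):ℝ) ^ D * r ^ (k+1)) := by
      have h5 : ((n+1:ℕ):ℝ) ^ D ≤ ((((m' + 2) + j + 1 : ℕ):ℝ) * ((k+1:ℕ):ℝ)) ^ D :=
        pow_le_pow_left₀ (by positivity) hle D
      calc ((n+1:ℕ):ℝ) ^ D * r ^ k * c
          ≤ ((((m' + 2) + j + 1 : ℕ):ℝ) * ((k+1:ℕ):ℝ)) ^ D * r ^ k * c := by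
            apply mul_le_mul_of_nonneg_right (mul_le_mul_of_nonneg_right h5 (by positivity)) hc0.le
        _ = C * (((k+1:ℕ):ℝ) ^ D * r ^ (k+1)) := by
            rw [hCdef, mul_pow, pow_succ]
            field_simp
    exact hfinal
  · -- Part 2
    set b : ℝ := (N:ℝ) ^ (N : ℕ) with hbdef
    have hb1 : (1:ℝ) < b := one_lt_pow₀ hN1 (by omega)
    have hb0 : (0:ℝ) < b := lt_trans one_pos hb1
    set ρ : ℝ := (b ^ (m - 1))⁻¹ with hρdef
    have hρ0 : 0 ≤ ρ := by positivity
    have hρ1 : ρ < 1 := by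
      rw [hρdef, inv_lt_one_iff₀]; right
      exact one_lt_pow₀ hb1 (by omega)
    set c0 : ℝ := (m : ℝ) ^ (((N : ℝ) - 1) / 2) with hc0def
    have hfun : (fun k : ℕ => c0 * b ^ ((1 - (m : ℤ)) * (k : ℤ) - (j : ℤ)))
        = fun k : ℕ => (c0 * (b ^ j)⁻¹) * ρ ^ k := by
      funext k
      have he : (1 - (m : ℤ)) * (k : ℤ) - (j : ℤ) = -(((m - 1) * k + j : ℕ) : ℤ) := by
        push_cast [Nat.cast_sub (by omega : 1 ≤ m)]
        ring
      rw [he, zpow_neg, zpow_natCast, pow_add, pow_mul, hρdef, mul_inv, inv_pow]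
      ring
    rw [hfun]
    have := (tendsto_pow_atTop_nhds_zero_of_lt_one hρ0 hρ1).const_mul (c0 * (b ^ j)⁻¹)
    simpa using this
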